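/- Let $k \in \{1,\ldots,n\}$ and let $x \in \mathbf{R}^n$ be such that the elementary symmetric polynomials satisfy $S_1(x) \ge 0, \ldots, S_k(x) \ge 0$. Then for all $1 \le i \le j \le k$, one has $\left(\frac{S_i(x)}{\binom{n}{i}}\right)^{1/i} \ge \left(\frac{S_j(x)}{\binom{n}{j}}\right)^{1/j}$ (the Maclaurin inequalities hold on the Gårding cone $\Gamma_k$, not just for vectors with positive entries). -/

import Mathlib

open Finset

noncomputable def esymm (n m : ℕ) (x : Fin n → ℝ) : ℝ :=
  ∑ s ∈ Finset.powersetCard m (Finset.univ : Finset (Fin n)), ∏ t ∈ s, x t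

open Polynomial in
section
lemma esymm_zero (n : ℕ) (x : Fin n → ℝ) : esymm n 0 x = 1 := by simp [esymm]

lemma esymm_eq_multiset (n m : ℕ) (x : Fin n → ℝ) :
    esymm n m x = (Finset.univ.val.map x).esymm m := by
  rw [Finset.esymm_map_val]; rfl


noncomputable def fpoly (n : ℕ) (x : Fin n → ℝ) : ℝ[X] :=
  ∏ i : Fin n, (X + C (x i))


lemma fpoly_coeff (n : ℕ) (x : Fin n → ℝ) {j : ℕ} (hj : j ≤ n) :
    (fpoly n x).coeff j = esymm n (n - j) x := by
  rw [fpoly, Finset.prod_X_add_C_coeff _ x (by simpa using hj)]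
  simp [esymm]


lemma deriv_fpoly (N : ℕ) (r : Fin N → ℝ) :
    derivative (fpoly N r)
      = ∑ i : Fin N, ∏ j ∈ Finset.univ.erase i, (X + C (r j)) := by
  rw [fpoly, Finset.prod, derivative_prod]
  rw [Finset.sum]
  congr 1
  rw [Multiset.map_congr rfl]
  intro i _
  simp [Finset.prod, Finset.erase_val]


lemma esymm_pred (N : ℕ) (r : Fin N → ℝ) (hN : 1 ≤ N) :
    esymm N (N - 1) r = ∑ i : Fin N, ∏ j ∈ Finset.univ.erase i, r j := by
  have h1 : (derivative (fpoly N r)).coeff 0 = esymm N (N-1) r * 1 := by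
    rw [coeff_derivative, fpoly_coeff N r hN]
    norm_num
  rw [mul_one] at h1
  rw [← h1, deriv_fpoly, finset_sum_coeff]
  refine Finset.sum_congr rfl fun i _ => ?_
  rw [Finset.prod_X_add_C_coeff _ _ (Nat.zero_le _)]
  rw [Nat.sub_zero, Finset.card_erase_of_mem (mem_univ i), card_univ, Fintype.card_fin]
  have hcard : (Finset.univ.erase i).card = N - 1 := by
    rw [Finset.card_erase_of_mem (mem_univ i), card_univ, Fintype.card_fin]
  rw [← hcard, powersetCard_self]
  simp

lemma fpoly_natDegree (n : ℕ) (x : Fin n → ℝ) : (fpoly n x).natDegree = n := by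
  rw [fpoly, natDegree_prod]
  · simp
  · intro i _; exact (monic_X_add_C (x i)).ne_zero


lemma fpoly_splits (n : ℕ) (x : Fin n → ℝ) :
    Multiset.card (fpoly n x).roots = (fpoly n x).natDegree := by
  rw [← splits_iff_card_roots, fpoly]
  exact Splits.prod fun i _ => Splits.of_natDegree_le_one (by simp)


lemma derivative_real_rooted (p : ℝ[X]) (hp : Multiset.card p.roots = p.natDegree) :
    Multiset.card (derivative p).roots = (derivative p).natDegree := by
  have h1 := p.card_roots_le_derivative
  have h2 := card_roots' (derivative p)
  have h3 := natDegree_derivative_le p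
  omega

lemma comp_X_sq_coeff_two (q : ℝ[X]) : (q.comp (X ^ 2)).coeff 2 = q.coeff 1 := by
  rw [comp_eq_sum_left, Polynomial.sum_def, finset_sum_coeff]
  rw [Finset.sum_eq_single 1]
  · simp [← pow_mul, coeff_X_pow]
  · intro b _ hb
    simp only [← pow_mul, coeff_C_mul, coeff_X_pow]
    rcases Nat.lt_or_ge b 1 with h | h
    · interval_cases b <;> simp
    · have : ¬ (2 = 2 * b) := by omega
      simp [this]
  · intro h
    simp [Polynomial.notMem_support_iff.mp h]


lemma gpoly_coeff (n : ℕ) (y : Fin n → ℝ) {b : ℕ} (hb : b ≤ n) :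
    (∏ i : Fin n, (X - C (y i))).coeff b = (-1)^(n-b) * esymm n (n - b) y := by
  have : (∏ i : Fin n, (X - C (y i)))
      = ((Finset.univ.val.map y).map (fun t => X - C t)).prod := by
    rw [Finset.prod, Multiset.map_map]; rfl
  rw [this, Multiset.prod_X_sub_C_coeff _ (by simpa using hb)]
  simp [esymm_eq_multiset]


lemma esymm_sq_identity (M : ℕ) (r : Fin (M + 2) → ℝ) :
    esymm (M+2) (M+1) r ^ 2
      = esymm (M+2) (M+1) (fun i => r i ^ 2)
        + 2 * (esymm (M+2) (M+2) r * esymm (M+2) M r) := by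
  have key : (fpoly (M+2) r * ∏ i : Fin (M+2), (X - C (r i))).coeff 2
      = ((∏ i : Fin (M+2), (X - C (r i ^ 2))).comp (X ^ 2)).coeff 2 := by
    congr 1
    rw [fpoly, ← Finset.prod_mul_distrib, Polynomial.prod_comp]
    refine Finset.prod_congr rfl fun i _ => ?_
    simp only [sub_comp, X_comp, C_comp]
    rw [show C (r i ^ 2) = C (r i) * C (r i) by rw [← C_mul, sq]]
    ring
  rw [comp_X_sq_coeff_two, gpoly_coeff (M+2) _ (by omega : 1 ≤ M+2), coeff_mul] at key
  rw [Finset.Nat.sum_antidiagonal_eq_sum_range_succ_mk] at key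
  rw [Finset.sum_range_succ, Finset.sum_range_succ, Finset.sum_range_one] at key
  rw [fpoly_coeff (M+2) r (by omega), fpoly_coeff (M+2) r (by omega), fpoly_coeff (M+2) r (by omega)] at key
  rw [gpoly_coeff (M+2) r (by omega), gpoly_coeff (M+2) r (by omega), gpoly_coeff (M+2) r (by omega)] at key
  have e0 : M + 2 - 0 = M + 2 := by omega
  have e1 : M + 2 - 1 = M + 1 := by omega
  have e2 : M + 2 - 2 = M := by omega
  rw [e0, e1, e2] at key
  have hpow : ((-1:ℝ))^(M+2) = (-1)^M := by ring
  have hpow1 : ((-1:ℝ))^(M+1) = -(-1)^M := by ring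
  rw [hpow, hpow1] at key
  have hc : ((-1:ℝ))^M ≠ 0 := by positivity
  apply mul_left_cancel₀ hc
  linear_combination -key

lemma newton_top (M : ℕ) (r : Fin (M + 2) → ℝ) :
    2 * ((M:ℝ)+2) * (esymm (M+2) (M+2) r * esymm (M+2) M r)
      ≤ ((M:ℝ)+1) * esymm (M+2) (M+1) r ^ 2 := by
  have e1 : M + 2 - 1 = M + 1 := by omega
  have h1 := esymm_pred (M+2) r (by omega)
  have h1s := esymm_pred (M+2) (fun i => r i ^ 2) (by omega)
  rw [e1] at h1 h1s
  have hsq : esymm (M+2) (M+1) (fun i => r i ^ 2)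
      = ∑ i : Fin (M+2), (∏ j ∈ Finset.univ.erase i, r j)^2 := by
    rw [h1s]
    exact Finset.sum_congr rfl fun i _ => by rw [← Finset.prod_pow]
  have hcs : (∑ i : Fin (M+2), ∏ j ∈ Finset.univ.erase i, r j)^2
      ≤ ((M:ℝ)+2) * ∑ i : Fin (M+2), (∏ j ∈ Finset.univ.erase i, r j)^2 := by
    have := sq_sum_le_card_mul_sum_sq (s := (univ : Finset (Fin (M+2))))
      (f := fun i => ∏ j ∈ Finset.univ.erase i, r j)
    simpa [card_univ] using this
  rw [← h1, ← hsq] at hcs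
  have hid := esymm_sq_identity M r
  nlinarith [hcs, hid]


lemma newton_top' (N : ℕ) (h2 : 2 ≤ N) (r : Fin N → ℝ) :
    2 * (N:ℝ) * (esymm N N r * esymm N (N-2) r)
      ≤ ((N:ℝ) - 1) * esymm N (N-1) r ^ 2 := by
  obtain ⟨M, rfl⟩ : ∃ M, N = M + 2 := ⟨N - 2, by omega⟩
  have e2 : M + 2 - 2 = M := by omega
  have e1 : M + 2 - 1 = M + 1 := by omega
  rw [e2, e1]
  have := newton_top M r
  push_cast
  linarith


lemma newton_top_multiset (R : Multiset ℝ) (h2 : 2 ≤ Multiset.card R) :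
    2 * (Multiset.card R : ℝ) * (R.esymm (Multiset.card R) * R.esymm (Multiset.card R - 2))
      ≤ ((Multiset.card R : ℝ) - 1) * R.esymm (Multiset.card R - 1) ^ 2 := by
  induction R using Quotient.inductionOn with
  | h l =>
    simp only [Multiset.quot_mk_to_coe] at h2 ⊢
    have hlen : Multiset.card (l : Multiset ℝ) = l.length := by simp
    have hR : ∀ t : ℕ, (l : Multiset ℝ).esymm t = esymm l.length t l.get := by
      intro t
      rw [esymm_eq_multiset, Fin.univ_val_map, List.ofFn_get]
    rw [hlen] at h2 ⊢
    rw [hR, hR, hR]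
    exact newton_top' l.length h2 l.get

lemma iterate_derivative_real_rooted (p : ℝ[X])
    (hp : Multiset.card p.roots = p.natDegree) (k : ℕ) :
    Multiset.card (derivative^[k] p).roots = (derivative^[k] p).natDegree := by
  induction k with
  | zero => exact hp
  | succ k ih => rw [Function.iterate_succ_apply']; exact derivative_real_rooted _ ih

lemma newton (a e : ℕ) (x : Fin (a + 2 + e) → ℝ) :
    ((a:ℝ)+2) * ((e:ℝ)+2) * (esymm (a+2+e) a x * esymm (a+2+e) (a+2) x)
      ≤ ((a:ℝ)+1) * ((e:ℝ)+1) * esymm (a+2+e) (a+1) x ^ 2 := by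
  set f := fpoly (a+2+e) x with hf
  set g := derivative^[e] f with hg
  have hdegf : f.natDegree = a+2+e := fpoly_natDegree _ x
  have hsplitg : Multiset.card g.roots = g.natDegree :=
    iterate_derivative_real_rooted f (fpoly_splits _ x) e
  have hcoeff : ∀ j : ℕ, j ≤ a + 2 →
      g.coeff j = ((j + e).descFactorial e : ℝ) * esymm (a+2+e) (a + 2 - j) x := by
    intro j hj
    rw [hg, Polynomial.coeff_iterate_derivative, nsmul_eq_mul,
      fpoly_coeff _ x (by omega : j + e ≤ a+2+e),
      (by omega : a + 2 + e - (j + e) = a + 2 - j)]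
  have htop : g.coeff (a+2) = (((a+2+e).descFactorial e : ℝ)) := by
    rw [hcoeff (a+2) le_rfl, (by omega : a + 2 - (a+2) = 0), esymm_zero,
      (by omega : a + 2 + e = a+2+e)]
    ring
  have hdegg : g.natDegree = a + 2 := by
    have h1 : g.natDegree ≤ a + 2 := by
      have h := natDegree_iterate_derivative f e
      rw [← hg, hdegf] at h
      omega
    have h2 : a + 2 ≤ g.natDegree := le_natDegree_of_ne_zero (by
      rw [htop]
      have h0 : (a+2+e).descFactorial e ≠ 0 := by
        rw [Ne, Nat.descFactorial_eq_zero_iff_lt]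
        omega
      exact_mod_cast h0)
    omega
  have hcard : Multiset.card g.roots = a + 2 := by rw [hsplitg, hdegg]
  set R := g.roots with hR
  set lc := g.leadingCoeff with hlc
  have hg_eq : g = C lc * (R.map fun r => X - C r).prod :=
    (splits_iff_card_roots.mpr hsplitg).eq_prod_roots
  have hcoeff2 : ∀ j : ℕ, j ≤ a + 2 →
      g.coeff j = lc * ((-1:ℝ)^(a + 2 - j) * R.esymm (a + 2 - j)) := by
    intro j hj
    conv_lhs => rw [hg_eq]
    rw [coeff_C_mul, Multiset.prod_X_sub_C_coeff _ (by omega : j ≤ Multiset.card R), hcard]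
  set B0 := esymm (a+2+e) a x
  set B1 := esymm (a+2+e) (a+1) x
  set B2 := esymm (a+2+e) (a+2) x
  set E0 := R.esymm a
  set E1 := R.esymm (a+1)
  set E2 := R.esymm (a+2)
  set s : ℝ := (-1:ℝ)^a with hs
  have hss : s * s = 1 := by
    rw [hs, ← pow_add, ← two_mul, pow_mul]
    norm_num
  have h0 : ((e.descFactorial e : ℝ)) * B2 = lc * (s * E2) := by
    have := (hcoeff 0 (by omega)).symm.trans (hcoeff2 0 (by omega))
    rw [(by omega : a + 2 - 0 = a + 2), (by omega : 0 + e = e)] at this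
    rw [this, hs]; ring
  have h1 : (((1 + e).descFactorial e : ℝ)) * B1 = -(lc * (s * E1)) := by
    have := (hcoeff 1 (by omega)).symm.trans (hcoeff2 1 (by omega))
    rw [(by omega : a + 2 - 1 = a + 1)] at this
    rw [this, hs]; ring
  have h2 : (((2 + e).descFactorial e : ℝ)) * B0 = lc * (s * E0) := by
    have := (hcoeff 2 (by omega)).symm.trans (hcoeff2 2 (by omega))
    rw [(by omega : a + 2 - 2 = a)] at this
    rw [this, hs]
  have hm : 2 * ((a:ℝ)+2) * (E2 * E0) ≤ ((a:ℝ)+1) * E1 ^ 2 := by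
    have := newton_top_multiset R (by omega)
    rw [hcard, (by omega : a + 2 - 2 = a), (by omega : a + 2 - 1 = a + 1)] at this
    push_cast at this
    convert this using 2 <;> ring
  have hm2 := mul_le_mul_of_nonneg_left hm (sq_nonneg lc)
  have key : 2 * ((a:ℝ)+2) * ((((e.descFactorial e : ℝ)) * B2) * ((((2+e).descFactorial e : ℝ)) * B0))
      ≤ ((a:ℝ)+1) * ((((1+e).descFactorial e : ℝ)) * B1) ^ 2 := by
    calc 2 * ((a:ℝ)+2) * ((((e.descFactorial e : ℝ)) * B2) * ((((2+e).descFactorial e : ℝ)) * B0))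
        = lc ^ 2 * (2 * ((a:ℝ)+2) * (E2 * E0)) := by
          rw [h0, h2]
          linear_combination (2 * ((a:ℝ)+2) * lc^2 * E2 * E0) * hss
      _ ≤ lc ^ 2 * (((a:ℝ)+1) * E1 ^ 2) := hm2
      _ = ((a:ℝ)+1) * ((((1+e).descFactorial e : ℝ)) * B1) ^ 2 := by
          rw [h1]
          linear_combination (-(((a:ℝ)+1) * lc^2 * E1^2)) * hss
  have hD0 : ((e.descFactorial e : ℝ)) = (Nat.factorial e : ℝ) := by
    exact_mod_cast congrArg (Nat.cast : ℕ → ℝ) (Nat.descFactorial_self e)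
  have hD1 : (((1+e).descFactorial e : ℝ)) = (Nat.factorial e : ℝ) * ((e:ℝ)+1) := by
    have : (1+e).descFactorial e = Nat.factorial e * (e+1) := by
      rw [Nat.descFactorial_eq_factorial_mul_choose, (by omega : 1 + e = e + 1),
        Nat.choose_succ_self_right]
    exact_mod_cast congrArg (Nat.cast : ℕ → ℝ) this
  have hD2 : 2 * (((2+e).descFactorial e : ℝ)) = (Nat.factorial e : ℝ) * (((e:ℝ)+2) * ((e:ℝ)+1)) := by
    have h2d : 2 * ((2+e).descFactorial e) = Nat.factorial e * ((e+2) * (e+1)) := by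
      rw [Nat.descFactorial_eq_factorial_mul_choose, (by omega : 2 + e = e + 2),
        ← Nat.choose_symm (by omega : e ≤ e + 2), (by omega : e + 2 - e = 2),
        Nat.choose_two_right, (by omega : e + 2 - 1 = e + 1)]
      have hdvd : 2 ∣ (e+2) * (e+1) := by
        have h := (Nat.even_mul_succ_self (e+1)).two_dvd
        rwa [mul_comm] at h
      rw [← mul_assoc, mul_comm 2 (Nat.factorial e), mul_assoc, Nat.mul_div_cancel' hdvd]
    exact_mod_cast congrArg (Nat.cast : ℕ → ℝ) h2d
  have hcpos : (0:ℝ) < (Nat.factorial e : ℝ)^2 * ((e:ℝ)+1) := by positivity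
  refine le_of_mul_le_mul_right ?_ hcpos
  calc ((a:ℝ)+2) * ((e:ℝ)+2) * (B0 * B2) * ((Nat.factorial e : ℝ)^2 * ((e:ℝ)+1))
      = 2 * ((a:ℝ)+2) * ((((e.descFactorial e : ℝ)) * B2) * ((((2+e).descFactorial e : ℝ)) * B0)) := by
        rw [hD0]
        linear_combination (-(((a:ℝ)+2) * B0 * B2 * (Nat.factorial e : ℝ))) * hD2
    _ ≤ ((a:ℝ)+1) * ((((1+e).descFactorial e : ℝ)) * B1) ^ 2 := key
    _ = ((a:ℝ)+1) * ((e:ℝ)+1) * B1 ^ 2 * ((Nat.factorial e : ℝ)^2 * ((e:ℝ)+1)) := by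
        rw [hD1]; ring

lemma newton_norm (n a : ℕ) (h : a + 2 ≤ n) (x : Fin n → ℝ) :
    esymm n a x / (n.choose a : ℝ) * (esymm n (a+2) x / (n.choose (a+2) : ℝ))
      ≤ (esymm n (a+1) x / (n.choose (a+1) : ℝ)) ^ 2 := by
  obtain ⟨e, rfl⟩ : ∃ e, n = a + 2 + e := ⟨n - (a+2), by omega⟩
  set c0 := ((a+2+e).choose a : ℝ) with hc0
  set c1 := ((a+2+e).choose (a+1) : ℝ) with hc1
  set c2 := ((a+2+e).choose (a+2) : ℝ) with hc2
  have hp0 : 0 < c0 := by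
    rw [hc0]; exact_mod_cast Nat.choose_pos (by omega)
  have hp1 : 0 < c1 := by
    rw [hc1]; exact_mod_cast Nat.choose_pos (by omega)
  have hp2 : 0 < c2 := by
    rw [hc2]; exact_mod_cast Nat.choose_pos (by omega)
  have hi : c1 * ((a:ℝ)+1) = c0 * ((e:ℝ)+2) := by
    have h := Nat.choose_succ_right_eq (a+2+e) a
    rw [(by omega : a + 2 + e - a = e + 2)] at h
    rw [hc0, hc1]
    exact_mod_cast congrArg (Nat.cast : ℕ → ℝ) h
  have hii : c2 * ((a:ℝ)+2) = c1 * ((e:ℝ)+1) := by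
    have h := Nat.choose_succ_right_eq (a+2+e) (a+1)
    rw [(by omega : a + 2 + e - (a+1) = e + 1), (by omega : a + 1 + 1 = a + 2)] at h
    rw [hc1, hc2]
    exact_mod_cast congrArg (Nat.cast : ℕ → ℝ) h
  have hId : ((a:ℝ)+2) * ((e:ℝ)+2) * (c0*c2) = ((a:ℝ)+1) * ((e:ℝ)+1) * c1^2 := by
    linear_combination (-(((a:ℝ)+2) * c2)) * hi + (((a:ℝ)+1) * c1) * hii
  have hN := newton a e x
  set B0 := esymm (a+2+e) a x
  set B1 := esymm (a+2+e) (a+1) x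
  set B2 := esymm (a+2+e) (a+2) x
  rw [div_mul_div_comm, div_pow, div_le_div_iff₀ (by positivity) (by positivity)]
  have hγ : (0:ℝ) < ((a:ℝ)+1) * ((e:ℝ)+1) := by positivity
  refine le_of_mul_le_mul_left ?_ hγ
  calc ((a:ℝ)+1) * ((e:ℝ)+1) * (B0 * B2 * c1^2)
      = (c0 * c2) * (((a:ℝ)+2) * ((e:ℝ)+2) * (B0 * B2)) := by
        linear_combination (B0 * B2) * hId.symm
    _ ≤ (c0 * c2) * (((a:ℝ)+1) * ((e:ℝ)+1) * B1^2) := by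
        have := mul_le_mul_of_nonneg_left hN (le_of_lt (mul_pos hp0 hp2))
        exact this
    _ = ((a:ℝ)+1) * ((e:ℝ)+1) * (B1^2 * (c0 * c2)) := by ring


lemma esymm_shift_pos (n k : ℕ) (hk : k ≤ n) (x : Fin n → ℝ)
    (hx : ∀ m : ℕ, 1 ≤ m → m ≤ k → 0 ≤ esymm n m x)
    (m : ℕ) (hm : m ≤ k) {ε : ℝ} (hε : 0 < ε) :
    0 < esymm n m (fun t => x t + ε) := by
  rcases Nat.eq_zero_or_pos m with rfl | hm1
  · rw [esymm_zero]; norm_num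
  have hmn : m ≤ n := le_trans hm hk
  have hcomp : fpoly n (fun t => x t + ε) = (fpoly n x).comp (X + C ε) := by
    rw [fpoly, fpoly, Polynomial.prod_comp]
    refine Finset.prod_congr rfl fun t _ => ?_
    rw [add_comp, X_comp, C_comp, C_add]
    ring
  have h1 : esymm n m (fun t => x t + ε)
      = ((fpoly n x).hasseDeriv (n - m)).eval ε := by
    have h2 := fpoly_coeff n (fun t => x t + ε) (Nat.sub_le n m)
    rw [(by omega : n - (n - m) = m)] at h2
    rw [← h2, hcomp, ← Polynomial.taylor_apply, Polynomial.taylor_coeff]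
  rw [h1]
  have hdeg : ((fpoly n x).hasseDeriv (n - m)).natDegree < m + 1 := by
    have := Polynomial.natDegree_hasseDeriv (fpoly n x) (n - m)
    rw [fpoly_natDegree] at this
    omega
  rw [Polynomial.eval_eq_sum_range' hdeg]
  have hterm : ∀ i : ℕ, i ≤ m →
      ((fpoly n x).hasseDeriv (n - m)).coeff i
        = ((i + (n - m)).choose (n - m) : ℝ) * esymm n (m - i) x := by
    intro i hi
    rw [Polynomial.hasseDeriv_coeff, fpoly_coeff n x (by omega : i + (n - m) ≤ n),
      (by omega : n - (i + (n - m)) = m - i)]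
  refine Finset.sum_pos' ?_ ⟨m, Finset.self_mem_range_succ m, ?_⟩
  · intro i hi
    rw [Finset.mem_range] at hi
    rw [hterm i (by omega)]
    have hb : (0:ℝ) ≤ ((i + (n - m)).choose (n - m) : ℝ) := by positivity
    have he : (0:ℝ) ≤ esymm n (m - i) x := by
      rcases Nat.eq_zero_or_pos (m - i) with h0 | h0
      · rw [h0, esymm_zero]; norm_num
      · exact hx (m - i) h0 (by omega)
    positivity
  · rw [hterm m le_rfl, (by omega : m - m = 0), esymm_zero]
    have hb : (0:ℝ) < ((m + (n - m)).choose (n - m) : ℝ) := by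
      exact_mod_cast Nat.choose_pos (by omega)
    positivity


lemma maclaurin_of_pos (k : ℕ) (q : ℕ → ℝ)
    (hpos : ∀ m, m ≤ k → 0 < q m) (h0 : q 0 = 1)
    (hnewton : ∀ a, a + 2 ≤ k → q a * q (a+2) ≤ q (a+1) ^ 2)
    (i j : ℕ) (hi : 1 ≤ i) (hij : i ≤ j) (hjk : j ≤ k) :
    q j ^ ((1:ℝ)/j) ≤ q i ^ ((1:ℝ)/i) := by
  have hC : ∀ m, m + 1 ≤ k → q (m+1) ^ m ≤ q m ^ (m+1) := by
    intro m
    induction m with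
    | zero => intro _; simp [h0]
    | succ m ih =>
      intro hm2
      have IH := ih (by omega)
      have hA := hpos m (by omega)
      have hB := hpos (m+1) (by omega)
      have hCc := hpos (m+2) (by omega)
      have hN := hnewton m (by omega)
      have h1 : (q m * q (m+2)) ^ (m+1) ≤ (q (m+1) ^ 2) ^ (m+1) :=
        pow_le_pow_left₀ (by positivity) hN (m+1)
      have h2 : q (m+2) ^ (m+1) * q (m+1) ^ m ≤ q (m+2) ^ (m+1) * q m ^ (m+1) :=
        mul_le_mul_of_nonneg_left IH (by positivity)
      have h3 : q (m+2) ^ (m+1) * q m ^ (m+1) = (q m * q (m+2)) ^ (m+1) := by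
        rw [mul_pow]; ring
      have h4 : (q (m+1) ^ 2) ^ (m+1) = q (m+1) ^ (m+2) * q (m+1) ^ m := by
        rw [← pow_mul, ← pow_add]
        congr 1
        omega
      have h5 : q (m+2) ^ (m+1) * q (m+1) ^ m ≤ q (m+1) ^ (m+2) * q (m+1) ^ m := by
        calc q (m+2) ^ (m+1) * q (m+1) ^ m ≤ q (m+2) ^ (m+1) * q m ^ (m+1) := h2
          _ = (q m * q (m+2)) ^ (m+1) := h3
          _ ≤ (q (m+1) ^ 2) ^ (m+1) := h1
          _ = q (m+1) ^ (m+2) * q (m+1) ^ m := h4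
      exact le_of_mul_le_mul_right h5 (by positivity)
  have hmono : ∀ m, 1 ≤ m → m + 1 ≤ k →
      q (m+1) ^ ((1:ℝ)/(m+1:ℕ)) ≤ q m ^ ((1:ℝ)/m) := by
    intro m hm1 hmk
    have hA := hpos m (by omega)
    have hB := hpos (m+1) (by omega)
    have h := hC m hmk
    have hα : (0:ℝ) < 1 / ((m:ℝ) * ((m:ℝ)+1)) := by positivity
    have hr := Real.rpow_le_rpow (by positivity) h (le_of_lt hα)
    rw [← Real.rpow_natCast (q (m+1)) m, ← Real.rpow_natCast (q m) (m+1),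
      ← Real.rpow_mul (le_of_lt hB), ← Real.rpow_mul (le_of_lt hA)] at hr
    have e1 : (m:ℝ) * (1 / ((m:ℝ) * ((m:ℝ)+1))) = 1 / ((m:ℝ)+1) := by
      field_simp
    have e2 : ((m:ℝ)+1) * (1 / ((m:ℝ) * ((m:ℝ)+1))) = 1 / (m:ℝ) := by
      field_simp
    rw [show ((m+1 : ℕ) : ℝ) = (m:ℝ)+1 by push_cast; ring] at hr ⊢
    rw [e1, e2] at hr
    exact hr
  clear hC
  induction j, hij using Nat.le_induction with
  | base => exact le_rfl
  | succ j hij ih =>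
    have h1 := hmono j (by omega) (by omega)
    have h2 := ih (by omega)
    calc q (j+1) ^ ((1:ℝ)/(j+1:ℕ)) ≤ q j ^ ((1:ℝ)/j) := h1
      _ ≤ q i ^ ((1:ℝ)/i) := h2

/-- Maclaurin inequalities on the Gårding cone `Γ_k`. -/
theorem maclaurin_on_garding_cone (n k : ℕ) (hk1 : 1 ≤ k) (hkn : k ≤ n)
    (x : Fin n → ℝ) (hx : ∀ m : ℕ, 1 ≤ m → m ≤ k → 0 ≤ esymm n m x)
    (i j : ℕ) (hi : 1 ≤ i) (hij : i ≤ j) (hjk : j ≤ k) :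
    (esymm n j x / (n.choose j : ℝ)) ^ ((1 : ℝ) / j)
      ≤ (esymm n i x / (n.choose i : ℝ)) ^ ((1 : ℝ) / i) := by
  have key : ∀ ε : ℝ, 0 < ε →
      (esymm n j (fun t => x t + ε) / (n.choose j : ℝ)) ^ ((1:ℝ)/j)
        ≤ (esymm n i (fun t => x t + ε) / (n.choose i : ℝ)) ^ ((1:ℝ)/i) := by
    intro ε hε
    refine maclaurin_of_pos k
      (fun m => esymm n m (fun t => x t + ε) / (n.choose m : ℝ)) ?_ ?_ ?_ i j hi hij hjk
    · intro m hm
      have h1 := esymm_shift_pos n k hkn x hx m hm hε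
      have h2 : (0:ℝ) < (n.choose m : ℝ) := by
        exact_mod_cast Nat.choose_pos (le_trans hm hkn)
      positivity
    · simp [esymm_zero]
    · intro a ha
      exact newton_norm n a (by omega) _
  have hcont : ∀ m : ℕ, Filter.Tendsto
      (fun ε : ℝ => esymm n m (fun t => x t + ε) / (n.choose m : ℝ))
      (nhdsWithin 0 (Set.Ioi 0)) (nhds (esymm n m x / (n.choose m : ℝ))) := by
    intro m
    have hc : Continuous fun ε : ℝ => esymm n m (fun t => x t + ε) := by
      unfold esymm
      refine continuous_finset_sum _ fun s _ => continuous_finset_prod _ fun t _ => ?_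
      exact continuous_const.add continuous_id
    have h0 : esymm n m (fun t => x t + 0) = esymm n m x := by simp
    have h1 := (hc.tendsto 0).mono_left (nhdsWithin_le_nhds (s := Set.Ioi (0:ℝ)))
    rw [h0] at h1
    exact h1.div_const _
  have hrpow : ∀ m : ℕ, Filter.Tendsto
      (fun ε : ℝ => (esymm n m (fun t => x t + ε) / (n.choose m : ℝ)) ^ ((1:ℝ)/m))
      (nhdsWithin 0 (Set.Ioi 0)) (nhds ((esymm n m x / (n.choose m : ℝ)) ^ ((1:ℝ)/m))) := by
    intro m
    exact (Real.continuousAt_rpow_const _ _ (Or.inr (by positivity))).tendsto.comp (hcont m)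
  refine le_of_tendsto_of_tendsto (hrpow j) (hrpow i) ?_
  filter_upwards [self_mem_nhdsWithin] with ε hε
  exact key ε hε

end
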